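/- Let n ≥ 1, let β^(2n) = (β_{ij})_{0≤i+j≤2n} be a real sequence, let Ψ(x,y) = (a+bx+cy, d+ex+fy) with bf − ce ≠ 0, and let β̃^(2n) be the transformed sequence β̃_{ij} := L_β(Ψ₁^i Ψ₂^j). Then M(n) admits a flat extension if and only if M̃(n) admits a flat extension. -/

import Mathlib

/-- Index set for the moment matrix of degree `n`:
pairs `(i,j)` of nonnegative integers with `i + j ≤ n`. -/
abbrev MIdx (n : ℕ) := {ij : Fin (n+1) × Fin (n+1) // (ij.1 : ℕ) + (ij.2 : ℕ) ≤ n}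

/-- The moment matrix `M(n)` of a real sequence `β = (β_{ij})`:
`M(n)[(i,j),(k,l)] = β_{i+k, j+l}`. -/
def momentMatrix (n : ℕ) (β : ℕ → ℕ → ℝ) : Matrix (MIdx n) (MIdx n) ℝ :=
  fun p q => β ((p.val.1 : ℕ) + (q.val.1 : ℕ)) ((p.val.2 : ℕ) + (q.val.2 : ℕ))
open MvPolynomial

/-- The Riesz functional of a sequence `β`: `L_β(Σ p_{ij} x^i y^j) = Σ p_{ij} β_{ij}`. -/
noncomputable def riesz (β : ℕ → ℕ → ℝ) (p : MvPolynomial (Fin 2) ℝ) : ℝ :=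
  ∑ m ∈ p.support, p.coeff m * β (m 0) (m 1)

/-- The sequence transformed by the degree-one map
`Ψ(x,y) = (a + bx + cy, d + ex + fy)`:  `β̃_{ij} := L_β(Ψ₁^i Ψ₂^j)`. -/
noncomputable def transSeq (β : ℕ → ℕ → ℝ) (a b c d e f : ℝ) (i j : ℕ) : ℝ :=
  riesz β ((C a + C b * X 0 + C c * X 1) ^ i * (C d + C e * X 0 + C f * X 1) ^ j)

/-- `M(n)` admits a flat extension `M(n+1)`: the sequence can be extended by new
moments of degrees `2n+1` and `2n+2` so that the extended moment matrix `M(n+1)`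
is positive semidefinite with `rank M(n+1) = rank M(n)`. -/
def HasFlatExtension (n : ℕ) (β : ℕ → ℕ → ℝ) : Prop :=
  ∃ β' : ℕ → ℕ → ℝ,
    (∀ i j : ℕ, i + j ≤ 2 * n → β' i j = β i j) ∧
    (momentMatrix (n + 1) β').PosSemidef ∧
    (momentMatrix (n + 1) β').rank = (momentMatrix n β).rank

/-! ### Auxiliary material -/

/-- The Riesz functional as a linear map. -/
noncomputable def rieszLm (β : ℕ → ℕ → ℝ) : MvPolynomial (Fin 2) ℝ →ₗ[ℝ] ℝ :=
  Finsupp.linearCombination ℝ (fun m : Fin 2 →₀ ℕ => β (m 0) (m 1)) ∘ₗ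
    (AddMonoidAlgebra.coeffLinearEquiv ℝ).toLinearMap

lemma riesz_eq_Lm (β : ℕ → ℕ → ℝ) (p : MvPolynomial (Fin 2) ℝ) : riesz β p = rieszLm β p := rfl

lemma riesz_monomial (β : ℕ → ℕ → ℝ) (m : Fin 2 →₀ ℕ) (r : ℝ) :
    riesz β (monomial m r) = r * β (m 0) (m 1) := by
  rw [riesz_eq_Lm]
  show Finsupp.linearCombination ℝ _ (AddMonoidAlgebra.coeffLinearEquiv ℝ (monomial m r)) = _
  rw [AddMonoidAlgebra.coeffLinearEquiv_apply, ← single_eq_monomial, AddMonoidAlgebra.coeff_single]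
  rw [Finsupp.linearCombination_single, smul_eq_mul]

/-- The affine polynomial `a + b x + c y`. -/
noncomputable def aff (a b c : ℝ) : MvPolynomial (Fin 2) ℝ :=
  C a + C b * X 0 + C c * X 1

lemma transSeq_def (β : ℕ → ℕ → ℝ) (a b c d e f : ℝ) (i j : ℕ) :
    transSeq β a b c d e f i j = riesz β (aff a b c ^ i * aff d e f ^ j) := rfl

lemma aff_totalDegree (a b c : ℝ) : (aff a b c).totalDegree ≤ 1 := by
  have h1 : (C a : MvPolynomial (Fin 2) ℝ).totalDegree ≤ 1 := by simp
  have h2 : ((C b : MvPolynomial (Fin 2) ℝ) * X 0).totalDegree ≤ 1 :=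
    le_trans (totalDegree_mul _ _) (by simp)
  have h3 : ((C c : MvPolynomial (Fin 2) ℝ) * X 1).totalDegree ≤ 1 :=
    le_trans (totalDegree_mul _ _) (by simp)
  exact le_trans (totalDegree_add _ _)
    (max_le (le_trans (totalDegree_add _ _) (max_le h1 h2)) h3)

lemma affPow_totalDegree (a b c d e f : ℝ) (i j : ℕ) :
    (aff a b c ^ i * aff d e f ^ j).totalDegree ≤ i + j := by
  refine le_trans (totalDegree_mul _ _) (add_le_add ?_ ?_)
  · exact le_trans (totalDegree_pow _ _) (by nlinarith [aff_totalDegree a b c])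
  · exact le_trans (totalDegree_pow _ _) (by nlinarith [aff_totalDegree d e f])

lemma riesz_mul (β : ℕ → ℕ → ℝ) (P Q : MvPolynomial (Fin 2) ℝ) :
    riesz β (P * Q) = ∑ m ∈ P.support, ∑ m' ∈ Q.support,
      P.coeff m * Q.coeff m' * β (m 0 + m' 0) (m 1 + m' 1) := by
  rw [riesz_eq_Lm]
  conv_lhs => rw [P.as_sum, Q.as_sum, Finset.sum_mul_sum]
  rw [map_sum]
  refine Finset.sum_congr rfl fun m hm => ?_
  rw [map_sum]
  refine Finset.sum_congr rfl fun m' hm' => ?_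
  rw [monomial_mul, ← riesz_eq_Lm, riesz_monomial]
  simp

lemma aeval_as_sum (v : Fin 2 → MvPolynomial (Fin 2) ℝ) (p : MvPolynomial (Fin 2) ℝ) :
    (aeval v p : MvPolynomial (Fin 2) ℝ)
      = ∑ m ∈ p.support, (p.coeff m) • (v 0 ^ m 0 * v 1 ^ m 1) := by
  conv_lhs => rw [p.as_sum]
  rw [map_sum]
  refine Finset.sum_congr rfl fun m hm => ?_
  rw [aeval_monomial, Finsupp.prod_fintype _ _ (by simp), Fin.prod_univ_two]
  rw [algebraMap_eq, smul_eq_C_mul]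

lemma riesz_trans (β : ℕ → ℕ → ℝ) (a b c d e f : ℝ) (p : MvPolynomial (Fin 2) ℝ) :
    riesz (transSeq β a b c d e f) p
      = riesz β (aeval ![aff a b c, aff d e f] p) := by
  rw [aeval_as_sum]
  conv_rhs => rw [riesz_eq_Lm, map_sum]
  unfold riesz
  refine Finset.sum_congr rfl fun m hm => ?_
  rw [map_smul, smul_eq_mul, ← riesz_eq_Lm]
  simp only [Matrix.cons_val_zero, Matrix.cons_val_one, Matrix.head_cons]
  rw [← transSeq_def]

lemma aeval_aff (a b c d e f a' b' c' : ℝ) :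
    aeval ![aff a b c, aff d e f] (aff a' b' c')
      = aff (a' + b'*a + c'*d) (b'*b + c'*e) (b'*c + c'*f) := by
  simp only [aff, map_add, map_mul, aeval_X, aeval_C, Matrix.cons_val_zero,
    Matrix.cons_val_one, Matrix.head_cons, C_add, C_mul, algebraMap_eq]
  ring

lemma transSeq_comp (β : ℕ → ℕ → ℝ) (a b c d e f a' b' c' d' e' f' : ℝ) (i j : ℕ) :
    transSeq (transSeq β a b c d e f) a' b' c' d' e' f' i j
      = transSeq β (a' + b'*a + c'*d) (b'*b + c'*e) (b'*c + c'*f)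
          (d' + e'*a + f'*d) (e'*b + f'*e) (e'*c + f'*f) i j := by
  rw [transSeq_def, riesz_trans, map_mul, map_pow, map_pow, aeval_aff, aeval_aff,
    ← transSeq_def]

lemma aff010 : aff 0 1 0 = (X 0 : MvPolynomial (Fin 2) ℝ) := by simp [aff]

lemma aff001 : aff 0 0 1 = (X 1 : MvPolynomial (Fin 2) ℝ) := by simp [aff]

lemma transSeq_id (β : ℕ → ℕ → ℝ) (i j : ℕ) : transSeq β 0 1 0 0 0 1 i j = β i j := by
  rw [transSeq_def, aff010, aff001, X_pow_eq_monomial, X_pow_eq_monomial, monomial_mul,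
    riesz_monomial]
  simp [Finsupp.single_apply]

/-- Embedding of the index set into monomials. -/
noncomputable def eIdx {N : ℕ} (q : MIdx N) : Fin 2 →₀ ℕ :=
  Finsupp.single 0 (q.val.1 : ℕ) + Finsupp.single 1 (q.val.2 : ℕ)

@[simp] lemma eIdx_apply0 {N : ℕ} (q : MIdx N) : eIdx q 0 = (q.val.1 : ℕ) := by simp [eIdx]

@[simp] lemma eIdx_apply1 {N : ℕ} (q : MIdx N) : eIdx q 1 = (q.val.2 : ℕ) := by simp [eIdx]

lemma eIdx_inj {N : ℕ} : Function.Injective (eIdx (N := N)) := by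
  intro p q h
  have h0 : eIdx p 0 = eIdx q 0 := by rw [h]
  have h1 : eIdx p 1 = eIdx q 1 := by rw [h]
  simp only [eIdx_apply0, eIdx_apply1] at h0 h1
  ext
  · exact h0
  · exact h1

lemma mem_range_eIdx {N : ℕ} (m : Fin 2 →₀ ℕ) (h : m 0 + m 1 ≤ N) :
    ∃ q : MIdx N, eIdx q = m := by
  refine ⟨⟨(⟨m 0, by omega⟩, ⟨m 1, by omega⟩), by simpa using h⟩, ?_⟩
  ext i
  fin_cases i <;> simp [eIdx]

lemma degree_le {N : ℕ} (P : MvPolynomial (Fin 2) ℝ) (hP : P.totalDegree ≤ N)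
    (m : Fin 2 →₀ ℕ) (hm : m ∈ P.support) : m 0 + m 1 ≤ N := by
  have := MvPolynomial.le_totalDegree hm
  have hs : (m.sum fun _ e => e) = m 0 + m 1 := by
    rw [Finsupp.sum_fintype] <;> simp [Fin.sum_univ_two]
  omega

lemma riesz_congr {D : ℕ} (β β' : ℕ → ℕ → ℝ) (h : ∀ i j, i + j ≤ D → β' i j = β i j)
    (P : MvPolynomial (Fin 2) ℝ) (hP : P.totalDegree ≤ D) : riesz β' P = riesz β P := by
  unfold riesz
  refine Finset.sum_congr rfl fun m hm => ?_
  rw [h _ _ (degree_le P hP m hm)]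

lemma sum_support_eq {N : ℕ} (P : MvPolynomial (Fin 2) ℝ) (hP : P.totalDegree ≤ N)
    (F : (Fin 2 →₀ ℕ) → ℝ) :
    ∑ m ∈ P.support, P.coeff m * F m = ∑ q : MIdx N, P.coeff (eIdx q) * F (eIdx q) := by
  classical
  have h1 : ∑ q : MIdx N, P.coeff (eIdx q) * F (eIdx q)
      = ∑ m ∈ Finset.univ.image eIdx, P.coeff m * F m :=
    (Finset.sum_image (f := fun m => P.coeff m * F m) (fun x _ y _ h => eIdx_inj h)).symm
  rw [h1]
  refine Finset.sum_subset ?_ ?_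
  · intro m hm
    obtain ⟨q, rfl⟩ := mem_range_eIdx m (degree_le P hP m hm)
    exact Finset.mem_image.2 ⟨q, Finset.mem_univ q, rfl⟩
  · intro m _ hm
    rw [MvPolynomial.notMem_support_iff.1 hm, zero_mul]

lemma sum_support_eq2 {N : ℕ} (P Q : MvPolynomial (Fin 2) ℝ)
    (hP : P.totalDegree ≤ N) (hQ : Q.totalDegree ≤ N)
    (F : (Fin 2 →₀ ℕ) → (Fin 2 →₀ ℕ) → ℝ) :
    ∑ m ∈ P.support, ∑ m' ∈ Q.support, P.coeff m * Q.coeff m' * F m m'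
      = ∑ r : MIdx N, ∑ s : MIdx N,
          P.coeff (eIdx r) * Q.coeff (eIdx s) * F (eIdx r) (eIdx s) := by
  simp only [mul_assoc, ← Finset.mul_sum]
  rw [sum_support_eq P hP (fun m => ∑ m' ∈ Q.support, Q.coeff m' * F m m')]
  refine Finset.sum_congr rfl fun r _ => ?_
  rw [sum_support_eq Q hQ (fun m' => F (eIdx r) m')]

open Matrix in
/-- Change-of-basis matrix of the degree-one transformation. -/
noncomputable def Jmat (N : ℕ) (a b c d e f : ℝ) : Matrix (MIdx N) (MIdx N) ℝ :=
  fun p q => (aff a b c ^ (p.val.1 : ℕ) * aff d e f ^ (p.val.2 : ℕ)).coeff (eIdx q)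

open Matrix in
lemma momentMatrix_trans (N : ℕ) (β : ℕ → ℕ → ℝ) (a b c d e f : ℝ) :
    momentMatrix N (transSeq β a b c d e f)
      = Jmat N a b c d e f * momentMatrix N β * (Jmat N a b c d e f)ᵀ := by
  ext p q
  have hL : momentMatrix N (transSeq β a b c d e f) p q
      = riesz β ((aff a b c ^ (p.val.1 : ℕ) * aff d e f ^ (p.val.2 : ℕ)) *
          (aff a b c ^ (q.val.1 : ℕ) * aff d e f ^ (q.val.2 : ℕ))) := by
    show transSeq β a b c d e f _ _ = _
    rw [transSeq_def]
    congr 1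
    ring
  rw [hL, riesz_mul,
    sum_support_eq2 _ _ (le_trans (affPow_totalDegree a b c d e f _ _) p.property)
      (le_trans (affPow_totalDegree a b c d e f _ _) q.property)]
  simp only [Matrix.mul_apply, Matrix.transpose_apply, Finset.sum_mul]
  rw [Finset.sum_comm]
  refine Finset.sum_congr rfl fun r _ => ?_
  refine Finset.sum_congr rfl fun s _ => ?_
  simp only [eIdx_apply0, eIdx_apply1, Jmat, momentMatrix]
  ring

lemma Jmat_mul (N : ℕ) (a b c d e f a' b' c' d' e' f' : ℝ) :
    Jmat N a b c d e f * Jmat N a' b' c' d' e' f'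
      = Jmat N (a + b*a' + c*d') (b*b' + c*e') (b*c' + c*f')
          (d + e*a' + f*d') (e*b' + f*e') (e*c' + f*f') := by
  ext p q
  rw [Matrix.mul_apply]
  have h := sum_support_eq (N := N) (aff a b c ^ (p.val.1 : ℕ) * aff d e f ^ (p.val.2 : ℕ))
    (le_trans (affPow_totalDegree a b c d e f _ _) p.property)
    (fun m => (aff a' b' c' ^ m 0 * aff d' e' f' ^ m 1).coeff (eIdx q))
  simp only [eIdx_apply0, eIdx_apply1] at h
  have h2 : ∑ m ∈ (aff a b c ^ (p.val.1 : ℕ) * aff d e f ^ (p.val.2 : ℕ)).support,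
      (aff a b c ^ (p.val.1 : ℕ) * aff d e f ^ (p.val.2 : ℕ)).coeff m *
        (aff a' b' c' ^ m 0 * aff d' e' f' ^ m 1).coeff (eIdx q)
      = (aeval ![aff a' b' c', aff d' e' f']
          (aff a b c ^ (p.val.1 : ℕ) * aff d e f ^ (p.val.2 : ℕ))).coeff (eIdx q) := by
    rw [aeval_as_sum, MvPolynomial.coeff_sum]
    simp [MvPolynomial.coeff_smul, smul_eq_mul]
  have h3 : aeval ![aff a' b' c', aff d' e' f']
        (aff a b c ^ (p.val.1 : ℕ) * aff d e f ^ (p.val.2 : ℕ))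
      = aff (a + b*a' + c*d') (b*b' + c*e') (b*c' + c*f') ^ (p.val.1 : ℕ)
        * aff (d + e*a' + f*d') (e*b' + f*e') (e*c' + f*f') ^ (p.val.2 : ℕ) := by
    rw [map_mul, map_pow, map_pow, aeval_aff, aeval_aff]
  show ∑ r : MIdx N, Jmat N a b c d e f p r * Jmat N a' b' c' d' e' f' r q = _
  simp only [Jmat]
  rw [← h, h2, h3]

lemma Jmat_id (N : ℕ) : Jmat N 0 1 0 0 0 1 = 1 := by
  ext p q
  have : (aff 0 1 0 ^ (p.val.1 : ℕ) * aff 0 0 1 ^ (p.val.2 : ℕ)) = monomial (eIdx p) 1 := by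
    rw [aff010, aff001, X_pow_eq_monomial, X_pow_eq_monomial, monomial_mul, one_mul, eIdx]
  rw [Jmat, this, coeff_monomial, Matrix.one_apply]
  exact if_congr ⟨fun h => eIdx_inj h, fun h => by rw [h]⟩ rfl rfl

lemma Jmat_det_isUnit (N : ℕ) (a b c d e f : ℝ) (hdet : b * f - c * e ≠ 0) :
    IsUnit (Jmat N a b c d e f).det := by
  have h1 : Jmat N a b c d e f *
      Jmat N ((c*d - f*a)/(b*f-c*e)) (f/(b*f-c*e)) (-c/(b*f-c*e)) ((e*a - b*d)/(b*f-c*e)) (-e/(b*f-c*e)) (b/(b*f-c*e)) = 1 := by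
    rw [Jmat_mul]
    have e1 : a + b*((c*d - f*a)/(b*f-c*e)) + c*((e*a - b*d)/(b*f-c*e)) = 0 := by field_simp <;> ring_nf
    have e2 : b*(f/(b*f-c*e)) + c*(-e/(b*f-c*e)) = 1 := by field_simp <;> ring_nf
    have e3 : b*(-c/(b*f-c*e)) + c*(b/(b*f-c*e)) = 0 := by field_simp <;> ring_nf
    have e4 : d + e*((c*d - f*a)/(b*f-c*e)) + f*((e*a - b*d)/(b*f-c*e)) = 0 := by
        have h := mul_inv_cancel₀ hdet; simp only [div_eq_mul_inv]; linear_combination (-d) * h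
    have e5 : e*(f/(b*f-c*e)) + f*(-e/(b*f-c*e)) = 0 := by field_simp <;> ring_nf
    have e6 : e*(-c/(b*f-c*e)) + f*(b/(b*f-c*e)) = 1 := by
        have h := mul_inv_cancel₀ hdet; simp only [div_eq_mul_inv]; linear_combination h
    rw [e1, e2, e3, e4, e5, e6, Jmat_id]
  have h2 := congrArg Matrix.det h1
  rw [Matrix.det_mul, Matrix.det_one] at h2
  exact IsUnit.of_mul_eq_one _ h2

open Matrix in
lemma hasFlatExtension_trans (n : ℕ) (β : ℕ → ℕ → ℝ) (a b c d e f : ℝ)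
    (hdet : b * f - c * e ≠ 0) (h : HasFlatExtension n β) :
    HasFlatExtension n (transSeq β a b c d e f) := by
  obtain ⟨β', hagree, hpsd, hrank⟩ := h
  refine ⟨transSeq β' a b c d e f, ?_, ?_, ?_⟩
  · intro i j hij
    rw [transSeq_def, transSeq_def]
    exact riesz_congr β β' hagree _ (le_trans (affPow_totalDegree a b c d e f i j) hij)
  · rw [momentMatrix_trans]
    have := hpsd.mul_mul_conjTranspose_same (Jmat (n+1) a b c d e f)
    rwa [Matrix.conjTranspose_eq_transpose_of_trivial] at this
  · rw [momentMatrix_trans (n+1) β' a b c d e f, momentMatrix_trans n β a b c d e f]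
    rw [Matrix.rank_mul_eq_left_of_isUnit_det _ _
        (by rw [Matrix.det_transpose]; exact Jmat_det_isUnit (n+1) a b c d e f hdet),
      Matrix.rank_mul_eq_right_of_isUnit_det _ _ (Jmat_det_isUnit (n+1) a b c d e f hdet),
      Matrix.rank_mul_eq_left_of_isUnit_det _ _
        (by rw [Matrix.det_transpose]; exact Jmat_det_isUnit n a b c d e f hdet),
      Matrix.rank_mul_eq_right_of_isUnit_det _ _ (Jmat_det_isUnit n a b c d e f hdet),
      hrank]

/-- Invariance under degree-one transformations, part (6).
`M(n)` admits a flat extension iff `M̃(n)` admits a flat extension. -/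
theorem momentMatrix_transform_flatExtension_iff
    (n : ℕ) (hn : 1 ≤ n) (β : ℕ → ℕ → ℝ) (a b c d e f : ℝ)
    (hdet : b * f - c * e ≠ 0) :
    HasFlatExtension n β ↔ HasFlatExtension n (transSeq β a b c d e f) := by
  constructor
  · exact hasFlatExtension_trans n β a b c d e f hdet
  · intro h
    have hdet' : (f/(b*f-c*e)) * (b/(b*f-c*e)) - (-c/(b*f-c*e)) * (-e/(b*f-c*e)) ≠ 0 := by
      have : (f/(b*f-c*e)) * (b/(b*f-c*e)) - (-c/(b*f-c*e)) * (-e/(b*f-c*e)) = 1/(b*f-c*e) := by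
        field_simp
      rw [this]
      exact one_div_ne_zero hdet
    have h2 := hasFlatExtension_trans n (transSeq β a b c d e f)
      ((c*d - f*a)/(b*f-c*e)) (f/(b*f-c*e)) (-c/(b*f-c*e)) ((e*a - b*d)/(b*f-c*e)) (-e/(b*f-c*e)) (b/(b*f-c*e)) hdet' h
    have key : transSeq (transSeq β a b c d e f)
        ((c*d - f*a)/(b*f-c*e)) (f/(b*f-c*e)) (-c/(b*f-c*e)) ((e*a - b*d)/(b*f-c*e)) (-e/(b*f-c*e)) (b/(b*f-c*e)) = β := by
      funext i j
      rw [transSeq_comp]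
      have e1 : (c*d - f*a)/(b*f-c*e) + (f/(b*f-c*e))*a + (-c/(b*f-c*e))*d = 0 := by field_simp <;> ring_nf
      have e2 : (f/(b*f-c*e))*b + (-c/(b*f-c*e))*e = 1 := by
        have h := mul_inv_cancel₀ hdet; simp only [div_eq_mul_inv]; linear_combination h
      have e3 : (f/(b*f-c*e))*c + (-c/(b*f-c*e))*f = 0 := by field_simp <;> ring_nf
      have e4 : (e*a - b*d)/(b*f-c*e) + (-e/(b*f-c*e))*a + (b/(b*f-c*e))*d = 0 := by field_simp <;> ring_nf
      have e5 : (-e/(b*f-c*e))*b + (b/(b*f-c*e))*e = 0 := by field_simp <;> ring_nf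
      have e6 : (-e/(b*f-c*e))*c + (b/(b*f-c*e))*f = 1 := by
        have h := mul_inv_cancel₀ hdet; simp only [div_eq_mul_inv]; linear_combination h
      rw [e1, e2, e3, e4, e5, e6, transSeq_id]
    rwa [key] at h2
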